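/- arXiv:2501.10945 — 2 statements merged into one kernel-verified Lean document; each statement's English description precedes it below -/
import Mathlib

section
/- Let g_1,…,g_m ∈ ℝ^d and let λ* ∈ Δ_m be a minimizer over the simplex Δ_m of λ ↦ ‖Σ_{i=1}^m λ_i g_i‖². Set d = Σ_{i=1}^m λ*_i g_i (the MGDA common descent direction). Then ⟨g_i, d⟩ ≥ ‖d‖² for every i ∈ [m]. Consequently, if d ≠ 0, then −d is a direction in which the linearization of every objective decreases by at least ‖d‖². -/
open RealInnerProductSpace

/-- Auxiliary: if `2*t*a + t^2*b ≥ 0` for all `t ∈ (0,1]` and `b ≥ 0`, then `a ≥ 0`. -/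
lemma aux_nonneg_of_quad {a b : ℝ} (hb : 0 ≤ b)
    (h : ∀ t : ℝ, 0 < t → t ≤ 1 → 0 ≤ 2 * t * a + t ^ 2 * b) : 0 ≤ a := by
  by_contra hneg
  push_neg at hneg
  set t : ℝ := min 1 (-a / (b + 1)) with ht
  have hbpos : 0 < b + 1 := by linarith
  have htpos : 0 < t := lt_min one_pos (div_pos (by linarith) hbpos)
  have ht1 : t ≤ 1 := min_le_left _ _
  have htb : t * (b + 1) ≤ -a := by
    have : t ≤ -a / (b + 1) := min_le_right _ _
    calc t * (b + 1) ≤ (-a / (b + 1)) * (b + 1) := by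
          exact mul_le_mul_of_nonneg_right this (le_of_lt hbpos)
      _ = -a := by field_simp
  have key := h t htpos ht1
  nlinarith [sq_nonneg t, mul_pos htpos htpos]

/-- If `lam` minimizes `‖∑ i, λ i • g i‖²` over the simplex, then the MGDA
direction `dir = ∑ i, lam i • g i` satisfies `⟪g i, dir⟫ ≥ ‖dir‖²` for every `i`. -/
theorem mgda_direction_common_descent
    {d m : ℕ} (g : Fin m → EuclideanSpace ℝ (Fin d))
    (lam : Fin m → ℝ) (hlam : ∀ i, 0 ≤ lam i) (hlamsum : ∑ i, lam i = 1)
    (hmin : ∀ μ : Fin m → ℝ, (∀ i, 0 ≤ μ i) → (∑ i, μ i = 1) →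
      ‖∑ i, lam i • g i‖ ^ 2 ≤ ‖∑ i, μ i • g i‖ ^ 2) :
    ∀ i, ‖∑ j, lam j • g j‖ ^ 2 ≤ ⟪g i, ∑ j, lam j • g j⟫ := by
  intro i
  set dir : EuclideanSpace ℝ (Fin d) := ∑ j, lam j • g j with hdir
  set a : ℝ := ⟪dir, g i - dir⟫ with ha
  set b : ℝ := ‖g i - dir‖ ^ 2 with hb
  have key : 0 ≤ a := by
    apply aux_nonneg_of_quad (b := b) (by rw [hb]; positivity)
    intro t htpos ht1
    set μ : Fin m → ℝ := fun j => (1 - t) * lam j + t * (if j = i then 1 else 0) with hμ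
    have hμnn : ∀ j, 0 ≤ μ j := by
      intro j
      by_cases hj : j = i
      · simp only [hμ, hj, eq_self_iff_true, if_true, mul_one]
        nlinarith [hlam i]
      · simp only [hμ, if_neg hj, mul_zero, add_zero]
        nlinarith [hlam j]
    have hμsum : ∑ j, μ j = 1 := by
      simp only [hμ, Finset.sum_add_distrib, ← Finset.mul_sum, hlamsum,
        Finset.sum_ite_eq' Finset.univ i (fun _ => (1:ℝ)), Finset.mem_univ,
        if_true]
      ring
    have hμvec : ∑ j, μ j • g j = dir + t • (g i - dir) := by
      have : ∑ j, μ j • g j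
          = ∑ j, (((1 - t) * lam j) • g j + (t * (if j = i then 1 else 0)) • g j) := by
        apply Finset.sum_congr rfl; intro j _; rw [← add_smul]
      rw [this, Finset.sum_add_distrib]
      have h1 : ∑ j, ((1 - t) * lam j) • g j = (1 - t) • dir := by
        rw [hdir, Finset.smul_sum]
        apply Finset.sum_congr rfl; intro j _; rw [smul_smul]
      have h2 : ∑ j, (t * (if j = i then 1 else 0)) • g j = t • g i := by
        rw [Finset.sum_eq_single i]
        · simp
        · intro j _ hj; simp [hj]
        · simp
      rw [h1, h2, sub_smul, one_smul, smul_sub]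
      abel
    have hineq := hmin μ hμnn hμsum
    rw [hμvec] at hineq
    have hexp : ‖dir + t • (g i - dir)‖ ^ 2 = ‖dir‖ ^ 2 + 2 * t * a + t ^ 2 * b := by
      rw [norm_add_sq_real, inner_smul_right, norm_smul, mul_pow]
      simp [ha, hb, Real.norm_eq_abs, sq_abs]
      ring
    rw [hexp] at hineq
    linarith
  have : a = ⟪g i, dir⟫ - ‖dir‖ ^ 2 := by
    rw [ha, inner_sub_right, real_inner_self_eq_norm_sq, real_inner_comm]
  linarith
end

section
/- Let K be a set, f = (f_1,…,f_m) : K → ℝ^m, z ∈ ℝ^m, μ > 0, and let α ∈ Δ_m satisfy α_i > 0 for all i. If θ* ∈ K minimizes the smooth Tchebycheff scalarization f_α^STCH(θ, μ) = μ log Σ_{i=1}^m exp(α_i (f_i(θ) − z_i)/μ) over K, then θ* is weakly Pareto optimal. -/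
/-- If `α` is in the simplex with all entries positive and `θs ∈ K` minimizes
the smooth Tchebycheff scalarization over `K` (with smoothing parameter `μ > 0` and
reference point `z`), then `θs` is weakly Pareto optimal. -/
theorem stch_min_is_weakly_pareto_optimal
    {Θ : Type*} {m : ℕ} (K : Set Θ)
    (f : Fin m → Θ → ℝ) (z : Fin m → ℝ) (μ : ℝ) (hμ : 0 < μ)
    (α : Fin m → ℝ) (hαpos : ∀ i, 0 < α i) (hαsum : ∑ i, α i = 1)
    (θs : Θ) (hθs : θs ∈ K)
    (hmin : ∀ θ ∈ K,
      μ * Real.log (∑ i, Real.exp (α i * (f i θs - z i) / μ)) ≤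
        μ * Real.log (∑ i, Real.exp (α i * (f i θ - z i) / μ))) :
    ¬ ∃ θ ∈ K, ∀ i, f i θ < f i θs := by
  rintro ⟨θ, hθ, hdom⟩
  have hm : m ≠ 0 := by
    rintro rfl
    simp at hαsum
  have hsum : (∑ i, Real.exp (α i * (f i θ - z i) / μ)) <
      ∑ i, Real.exp (α i * (f i θs - z i) / μ) := by
    apply Finset.sum_lt_sum_of_nonempty
    · exact Finset.univ_nonempty_iff.mpr ⟨⟨0, Nat.pos_of_ne_zero hm⟩⟩
    · intro i _
      apply Real.exp_lt_exp.mpr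
      apply div_lt_div_of_pos_right ?_ hμ
      nlinarith [hαpos i, hdom i]
  have hpos : 0 < ∑ i, Real.exp (α i * (f i θ - z i) / μ) :=
    Finset.sum_pos (fun i _ => Real.exp_pos _)
      (Finset.univ_nonempty_iff.mpr ⟨⟨0, Nat.pos_of_ne_zero hm⟩⟩)
  have := hmin θ hθ
  have hlog := Real.log_lt_log hpos hsum
  nlinarith [mul_lt_mul_of_pos_left hlog hμ]
end
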